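/- Under the assumptions of the generating lemma, if for every f ∈ F the series ∑ₙ ⟨f, A gₙ⟩ B hₙ is weakly subseries convergent (every subseries converges weakly), then (A gₙ, B hₙ) is a framing for F, i.e. f = ∑ₙ ⟨f, A gₙ⟩ B hₙ unconditionally (in norm) for all f ∈ F. -/

import Mathlib

open scoped ComplexInnerProductSpace
open Filter Finset

lemma weak_bounded {H : Type*} [NormedAddCommGroup H] [InnerProductSpace ℂ H] [CompleteSpace H]
    (v : ℕ → H) (hv : ∀ y : H, ∃ l : ℂ, Tendsto (fun M => ⟪y, v M⟫) atTop (nhds l)) :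
    ∃ C : ℝ, 0 ≤ C ∧ ∀ M, ‖v M‖ ≤ C := by
  obtain ⟨C', hC'⟩ := banach_steinhaus (g := fun M : ℕ => innerSL ℂ (v M)) (fun x => by
    obtain ⟨l, hl⟩ := hv x
    obtain ⟨C, hC⟩ := hl.norm.bddAbove_range
    refine ⟨C, fun M => ?_⟩
    have : ‖(innerSL ℂ (v M)) x‖ = ‖⟪x, v M⟫‖ := by
      simp [innerSL_apply_apply, norm_inner_symm]
    rw [this]
    exact hC (Set.mem_range_self M))
  refine ⟨max C' 0, le_max_right _ _, fun M => ?_⟩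
  have := hC' M
  rw [innerSL_apply_norm] at this
  exact this.trans (le_max_left _ _)

lemma op_summable {H : Type*} [NormedAddCommGroup H] [InnerProductSpace ℂ H] [CompleteSpace H]
    (c : ℕ → H)
    (hs : ∀ s : Set ℕ, ∃ x : H, ∀ y : H,
      Tendsto (fun N : ℕ => ⟪y, ∑ n ∈ Finset.range (N + 1), Set.indicator s c n⟫)
        atTop (nhds ⟪y, x⟫)) :
    Summable c := by
  classical
  by_contra hns
  rw [summable_iff_vanishing_norm] at hns
  push_neg at hns
  obtain ⟨ε, hε, hblk⟩ := hns
  -- blocks beyond any cutoff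
  have hblock : ∀ N : ℕ, ∃ t : Finset ℕ, (∀ n ∈ t, N ≤ n) ∧ ε ≤ ‖∑ n ∈ t, c n‖ := by
    intro N
    obtain ⟨t, hd, hn⟩ := hblk (Finset.range N)
    refine ⟨t, fun n hn' => ?_, hn⟩
    by_contra hlt
    push_neg at hlt
    exact (Finset.disjoint_left.mp hd hn') (Finset.mem_range.mpr hlt)
  choose t ht1 ht2 using hblock
  -- cutoffs
  set Nf : ℕ → ℕ := fun k => Nat.rec 0 (fun _ prev => (t prev).sup id + 1) k with hNf
  have hNfs : ∀ k, Nf (k + 1) = (t (Nf k)).sup id + 1 := fun k => rfl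
  set y : ℕ → H := fun k => ∑ n ∈ t (Nf k), c n with hy
  have hyε : ∀ k, ε ≤ ‖y k‖ := fun k => ht2 (Nf k)
  have hne : ∀ k, (t (Nf k)).Nonempty := by
    intro k
    rcases Finset.eq_empty_or_nonempty (t (Nf k)) with he | hne
    · exfalso
      have := hyε k
      rw [hy] at this
      simp only [he, Finset.sum_empty, norm_zero] at this
      exact absurd this (not_le.mpr hε)
    · exact hne
  have hblt : ∀ k, ∀ n ∈ t (Nf k), n < Nf (k + 1) := by
    intro k n hn
    rw [hNfs]
    exact Nat.lt_succ_of_le (Finset.le_sup (f := id) hn)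
  have hmono : StrictMono Nf := by
    apply strictMono_nat_of_lt_succ
    intro k
    obtain ⟨n, hn⟩ := hne k
    exact lt_of_le_of_lt (ht1 _ n hn) (hblt k n hn)
  -- interval ordering of blocks
  have horder : ∀ i j, i < j → ∀ n ∈ t (Nf i), ∀ m ∈ t (Nf j), n < m := by
    intro i j hij n hn m hm
    exact lt_of_lt_of_le (hblt i n hn) (le_trans (hmono.monotone hij) (ht1 _ m hm))
  -- the key identity
  have hkey : ∀ (J : Set ℕ) (K : ℕ),
      ∑ n ∈ Finset.range (Nf (K + 1)),
          Set.indicator {n | ∃ k, k ∈ J ∧ n ∈ t (Nf k)} c n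
        = ∑ k ∈ (Finset.range (K + 1)).filter (· ∈ J), y k := by
    intro J K
    have hset : (Finset.range (Nf (K + 1))).filter (· ∈ {n | ∃ k, k ∈ J ∧ n ∈ t (Nf k)})
        = ((Finset.range (K + 1)).filter (· ∈ J)).biUnion (fun k => t (Nf k)) := by
      ext n
      simp only [Finset.mem_filter, Finset.mem_range, Finset.mem_biUnion, Set.mem_setOf_eq]
      constructor
      · rintro ⟨hnM, k, hkJ, hkmem⟩
        refine ⟨k, ⟨?_, hkJ⟩, hkmem⟩
        by_contra hk
        push_neg at hk
        have : Nf (K + 1) ≤ n := le_trans (hmono.monotone hk) (ht1 _ n hkmem)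
        omega
      · rintro ⟨k, ⟨hkK, hkJ⟩, hkmem⟩
        refine ⟨lt_of_lt_of_le (hblt k n hkmem) (hmono.monotone hkK), k, hkJ, hkmem⟩
    calc ∑ n ∈ Finset.range (Nf (K + 1)),
            Set.indicator {n | ∃ k, k ∈ J ∧ n ∈ t (Nf k)} c n
        = ∑ n ∈ (Finset.range (Nf (K + 1))).filter
            (· ∈ {n | ∃ k, k ∈ J ∧ n ∈ t (Nf k)}), c n := by
          rw [Finset.sum_filter]
          exact Finset.sum_congr rfl fun n _ => by
            simp [Set.indicator_apply]
      _ = ∑ k ∈ (Finset.range (K + 1)).filter (· ∈ J), ∑ n ∈ t (Nf k), c n := by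
          rw [hset]
          refine Finset.sum_biUnion ?_
          intro i hi j hj hij
          rcases lt_or_gt_of_ne hij with h | h
          · exact Finset.disjoint_left.mpr fun n hn hn' =>
              lt_irrefl n (horder i j h n hn n hn')
          · exact Finset.disjoint_left.mpr fun n hn hn' =>
              lt_irrefl n (horder j i h n hn' n hn)
      _ = ∑ k ∈ (Finset.range (K + 1)).filter (· ∈ J), y k := rfl
  -- weak subseries convergence for the blocks
  have hys : ∀ J : Set ℕ, ∃ x : H, ∀ w : H,
      Tendsto (fun K => ⟪w, ∑ k ∈ (Finset.range (K + 1)).filter (· ∈ J), y k⟫)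
        atTop (nhds ⟪w, x⟫) := by
    intro J
    obtain ⟨x, hx⟩ := hs {n | ∃ k, k ∈ J ∧ n ∈ t (Nf k)}
    refine ⟨x, fun w => ?_⟩
    have hm : Tendsto (fun K : ℕ => Nf (K + 1) - 1) atTop atTop := by
      apply tendsto_atTop_mono (f := fun K : ℕ => K)
      · intro K
        have h1 : K + 1 ≤ Nf (K + 1) := hmono.le_apply
        omega
      · exact tendsto_id
    have := (hx w).comp hm
    have heq : ∀ K : ℕ, (Nf (K + 1) - 1) + 1 = Nf (K + 1) := by
      intro K
      have h1 : K + 1 ≤ Nf (K + 1) := hmono.le_apply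
      omega
    have hfun : (fun K : ℕ => ⟪w, ∑ n ∈ Finset.range ((Nf (K + 1) - 1) + 1),
        Set.indicator {n | ∃ k, k ∈ J ∧ n ∈ t (Nf k)} c n⟫)
        = fun K => ⟪w, ∑ k ∈ (Finset.range (K + 1)).filter (· ∈ J), y k⟫ := by
      funext K
      rw [heq K, hkey J K]
    rwa [show ((fun N : ℕ => ⟪w, ∑ n ∈ Finset.range (N + 1),
        Set.indicator {n | ∃ k, k ∈ J ∧ n ∈ t (Nf k)} c n⟫) ∘ fun K : ℕ => Nf (K + 1) - 1)
        = fun K => ⟪w, ∑ k ∈ (Finset.range (K + 1)).filter (· ∈ J), y k⟫ from hfun] at this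
  -- weak null
  have hynull : ∀ w : H, Tendsto (fun k => ⟪w, y k⟫) atTop (nhds 0) := by
    intro w
    obtain ⟨x, hx⟩ := hys Set.univ
    have hx' : Tendsto (fun K => ⟪w, ∑ k ∈ Finset.range (K + 1), y k⟫) atTop (nhds ⟪w, x⟫) := by
      have : ∀ K : ℕ, (Finset.range (K + 1)).filter (· ∈ Set.univ) = Finset.range (K + 1) := by
        intro K; simp
      simpa [this] using hx w
    have hdiff : Tendsto (fun K => ⟪w, y (K + 1)⟫) atTop (nhds 0) := by
      have h2 : Tendsto (fun K : ℕ => ⟪w, ∑ k ∈ Finset.range (K + 1 + 1), y k⟫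
          - ⟪w, ∑ k ∈ Finset.range (K + 1), y k⟫) atTop (nhds (⟪w, x⟫ - ⟪w, x⟫)) :=
        (hx'.comp (tendsto_add_atTop_nat 1)).sub hx'
      rw [sub_self] at h2
      exact h2.congr fun K => by
        rw [Finset.sum_range_succ (n := K + 1), inner_add_right]; ring
    exact (tendsto_add_atTop_iff_nat 1).mp hdiff
  -- choose almost orthogonal subsequence
  have hnext : ∀ m j : ℕ, ∃ k, m < k ∧ ∀ i ≤ m, ‖⟪y i, y k⟫‖ ≤ ε ^ 2 / 4 * (1 / 4 : ℝ) ^ j := by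
    intro m j
    have hδ : (0:ℝ) < ε ^ 2 / 4 * (1 / 4 : ℝ) ^ j := by positivity
    have hev : ∀ᶠ k in atTop, ∀ i ∈ Finset.range (m + 1),
        ‖⟪y i, y k⟫‖ ≤ ε ^ 2 / 4 * (1 / 4 : ℝ) ^ j := by
      rw [eventually_all_finset]
      intro i _
      exact ((hynull (y i)).norm.eventually (gt_mem_nhds (by simpa using hδ))).mono fun k hk => le_of_lt hk
    obtain ⟨k, hk1, hk2⟩ := (hev.and (eventually_gt_atTop m)).exists
    exact ⟨k, hk2, fun i hi => hk1 i (Finset.mem_range.mpr (Nat.lt_succ_of_le hi))⟩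
  choose nxt hlt hsml using hnext
  set φ : ℕ → ℕ := fun j => Nat.rec 0 (fun j prev => nxt prev (j + 1)) j with hφ
  have hφs : ∀ j, φ (j + 1) = nxt (φ j) (j + 1) := fun j => rfl
  have hφm : StrictMono φ := strictMono_nat_of_lt_succ fun j => by
    rw [hφs]; exact hlt _ _
  have hφsmall : ∀ i j, i < j → ‖⟪y (φ i), y (φ j)⟫‖ ≤ ε ^ 2 / 4 * (1 / 4 : ℝ) ^ j := by
    intro i j hij
    obtain ⟨j', rfl⟩ : ∃ j', j = j' + 1 := ⟨j - 1, by omega⟩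
    rw [hφs]
    exact hsml (φ j') (j' + 1) (φ i) (hφm.monotone (by omega))
  have hsym : ∀ i j, i ≠ j →
      ‖⟪y (φ i), y (φ j)⟫‖ ≤ ε ^ 2 / 4 * ((1 / 2 : ℝ) ^ i * (1 / 2 : ℝ) ^ j) := by
    intro i j hij
    have quarter : ∀ a b : ℕ, a < b →
        ε ^ 2 / 4 * (1 / 4 : ℝ) ^ b ≤ ε ^ 2 / 4 * ((1 / 2 : ℝ) ^ a * (1 / 2 : ℝ) ^ b) := by
      intro a b hab
      have h1 : ((1:ℝ) / 4) ^ b = (1 / 2 : ℝ) ^ b * (1 / 2 : ℝ) ^ b := by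
        rw [← mul_pow]; norm_num
      rw [h1]
      have h2 : ((1:ℝ) / 2) ^ b ≤ (1 / 2 : ℝ) ^ a :=
        pow_le_pow_of_le_one (by norm_num) (by norm_num) hab.le
      have h3 : (0:ℝ) ≤ (1 / 2 : ℝ) ^ b := by positivity
      exact mul_le_mul_of_nonneg_left (mul_le_mul_of_nonneg_right h2 h3) (by positivity)
    rcases lt_or_gt_of_ne hij with h | h
    · exact le_trans (hφsmall i j h) (quarter i j h)
    · rw [norm_inner_symm]
      refine le_trans (hφsmall j i h) (le_trans (quarter j i h) (le_of_eq (by ring)))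
  -- partial sums of the subsequence grow
  set S : ℕ → H := fun M => ∑ j ∈ Finset.range (M + 1), y (φ j) with hS
  have hSnorm : ∀ M : ℕ, ((M:ℝ) + 1) * ε ^ 2 - ε ^ 2 ≤ ‖S M‖ ^ 2 := by
    intro M
    have expand : (⟪S M, S M⟫ : ℂ)
        = ∑ i ∈ Finset.range (M + 1), ∑ j ∈ Finset.range (M + 1), ⟪y (φ i), y (φ j)⟫ := by
      rw [hS]
      rw [sum_inner]
      exact Finset.sum_congr rfl fun i _ => inner_sum _ _ _
    have hre : ‖S M‖ ^ 2 = Complex.re ⟪S M, S M⟫ := by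
      rw [← @inner_self_eq_norm_sq ℂ]
      rfl
    rw [hre, expand]
    rw [Complex.re_sum]
    have hterm : ∀ i ∈ Finset.range (M + 1),
        ε ^ 2 - ε ^ 2 / 4 * (1 / 2 : ℝ) ^ i * 2
          ≤ Complex.re (∑ j ∈ Finset.range (M + 1), ⟪y (φ i), y (φ j)⟫) := by
      intro i hi
      rw [Complex.re_sum]
      rw [← Finset.add_sum_erase _ _ hi]
      have h1 : ε ^ 2 ≤ Complex.re ⟪y (φ i), y (φ i)⟫ := by
        have : Complex.re ⟪y (φ i), y (φ i)⟫ = ‖y (φ i)‖ ^ 2 := by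
          rw [← @inner_self_eq_norm_sq ℂ]; rfl
        rw [this]
        exact pow_le_pow_left₀ hε.le (hyε (φ i)) 2
      have h2 : - (ε ^ 2 / 4 * (1 / 2 : ℝ) ^ i * 2)
          ≤ ∑ j ∈ (Finset.range (M + 1)).erase i, Complex.re ⟪y (φ i), y (φ j)⟫ := by
        have hb : ∀ j ∈ (Finset.range (M + 1)).erase i,
            - (ε ^ 2 / 4 * ((1 / 2 : ℝ) ^ i * (1 / 2 : ℝ) ^ j))
              ≤ Complex.re ⟪y (φ i), y (φ j)⟫ := by
          intro j hj
          have hij : i ≠ j := (Finset.ne_of_mem_erase hj).symm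
          have := hsym i j hij
          have habs : |Complex.re ⟪y (φ i), y (φ j)⟫| ≤ ‖⟪y (φ i), y (φ j)⟫‖ :=
            Complex.abs_re_le_norm _
          have := le_trans habs this
          linarith [(abs_le.mp (le_trans habs (hsym i j hij))).1]
        have hgeo : ∑ j ∈ (Finset.range (M + 1)).erase i,
            ε ^ 2 / 4 * ((1 / 2 : ℝ) ^ i * (1 / 2 : ℝ) ^ j)
              ≤ ε ^ 2 / 4 * (1 / 2 : ℝ) ^ i * 2 := by
          have hsub : ∑ j ∈ (Finset.range (M + 1)).erase i,
              ε ^ 2 / 4 * ((1 / 2 : ℝ) ^ i * (1 / 2 : ℝ) ^ j)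
              ≤ ∑ j ∈ Finset.range (M + 1),
                ε ^ 2 / 4 * ((1 / 2 : ℝ) ^ i * (1 / 2 : ℝ) ^ j) :=
            Finset.sum_le_sum_of_subset_of_nonneg (Finset.erase_subset _ _)
              (fun j _ _ => by positivity)
          have heq2 : ∑ j ∈ Finset.range (M + 1),
              ε ^ 2 / 4 * ((1 / 2 : ℝ) ^ i * (1 / 2 : ℝ) ^ j)
              = ε ^ 2 / 4 * (1 / 2 : ℝ) ^ i * ∑ j ∈ Finset.range (M + 1), (1 / 2 : ℝ) ^ j := by
            rw [Finset.mul_sum]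
            exact Finset.sum_congr rfl fun j _ => by ring
          have hg2 := sum_geometric_two_le (M + 1)
          have : ε ^ 2 / 4 * (1 / 2 : ℝ) ^ i * ∑ j ∈ Finset.range (M + 1), (1 / 2 : ℝ) ^ j
              ≤ ε ^ 2 / 4 * (1 / 2 : ℝ) ^ i * 2 :=
            mul_le_mul_of_nonneg_left hg2 (by positivity)
          linarith [hsub, heq2 ▸ hsub]
        calc - (ε ^ 2 / 4 * (1 / 2 : ℝ) ^ i * 2)
            ≤ - ∑ j ∈ (Finset.range (M + 1)).erase i,
                ε ^ 2 / 4 * ((1 / 2 : ℝ) ^ i * (1 / 2 : ℝ) ^ j) := neg_le_neg hgeo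
          _ = ∑ j ∈ (Finset.range (M + 1)).erase i,
                - (ε ^ 2 / 4 * ((1 / 2 : ℝ) ^ i * (1 / 2 : ℝ) ^ j)) := by
              rw [Finset.sum_neg_distrib]
          _ ≤ ∑ j ∈ (Finset.range (M + 1)).erase i, Complex.re ⟪y (φ i), y (φ j)⟫ :=
              Finset.sum_le_sum hb
      linarith
    have htot : ((M:ℝ) + 1) * ε ^ 2 - ε ^ 2
        ≤ ∑ i ∈ Finset.range (M + 1), (ε ^ 2 - ε ^ 2 / 4 * (1 / 2 : ℝ) ^ i * 2) := by
      have hsumeq : ∑ i ∈ Finset.range (M + 1), (ε ^ 2 - ε ^ 2 / 4 * (1 / 2 : ℝ) ^ i * 2)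
          = ((M:ℝ) + 1) * ε ^ 2
            - ε ^ 2 / 2 * ∑ i ∈ Finset.range (M + 1), (1 / 2 : ℝ) ^ i := by
        rw [Finset.sum_sub_distrib, Finset.sum_const, Finset.card_range, Finset.mul_sum]
        push_cast
        congr 1
        · ring
        · exact Finset.sum_congr rfl fun i _ => by ring
      rw [hsumeq]
      have hg2 := sum_geometric_two_le (M + 1)
      have h3 : (0:ℝ) ≤ ε ^ 2 / 2 := by positivity
      nlinarith
    exact le_trans htot (Finset.sum_le_sum hterm)
  -- weak convergence of the partial sums S
  have hSweak : ∀ w : H, ∃ l : ℂ, Tendsto (fun M => ⟪w, S M⟫) atTop (nhds l) := by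
    intro w
    obtain ⟨x, hx⟩ := hys (Set.range φ)
    refine ⟨⟪w, x⟫, ?_⟩
    have hcomp := (hx w).comp hφm.tendsto_atTop
    have heq : ∀ M : ℕ,
        ∑ k ∈ (Finset.range (φ M + 1)).filter (· ∈ Set.range φ), y k = S M := by
      intro M
      have himg : (Finset.range (φ M + 1)).filter (· ∈ Set.range φ)
          = (Finset.range (M + 1)).image φ := by
        ext k
        simp only [Finset.mem_filter, Finset.mem_range, Finset.mem_image, Set.mem_range]
        constructor
        · rintro ⟨hk, j, rfl⟩
          exact ⟨j, Nat.lt_succ_of_le (hφm.le_iff_le.mp (Nat.lt_succ_iff.mp hk)), rfl⟩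
        · rintro ⟨j, hj, rfl⟩
          exact ⟨Nat.lt_succ_of_le (hφm.monotone (Nat.lt_succ_iff.mp hj)), j, rfl⟩
      rw [himg, Finset.sum_image (fun a _ b _ hab => hφm.injective hab)]
    exact hcomp.congr fun M => by
      simp only [Function.comp_apply]
      rw [heq M]
  obtain ⟨C, hC0, hCb⟩ := weak_bounded S hSweak
  obtain ⟨M, hM⟩ := exists_nat_gt ((C ^ 2 + ε ^ 2) / ε ^ 2)
  have h1 := hSnorm M
  have h2 : ‖S M‖ ^ 2 ≤ C ^ 2 := by
    have := hCb M
    nlinarith [norm_nonneg (S M)]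
  have hM' : C ^ 2 + ε ^ 2 < (M:ℝ) * ε ^ 2 := by
    rw [div_lt_iff₀ (by positivity)] at hM
    linarith
  nlinarith


/-- Orlicz–Pettis step: under the hypotheses of the generating lemma, if for every `f ∈ F`
the series `∑ₙ ⟨f, A gₙ⟩ B hₙ` is weakly subseries convergent, then `(A gₙ, B hₙ)` is a
framing for `F`: the series converges unconditionally (in norm) to `f`. -/
theorem framing_orlicz_pettis {H : Type*} [NormedAddCommGroup H] [InnerProductSpace ℂ H]
    [CompleteSpace H] (g h : ℕ → H) (F : Set H) (A B : H →ₗ.[ℂ] H)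
    (hAdense : Dense (A.domain : Set H)) (hBdense : Dense (B.domain : Set H))
    (hAclosed : A.IsClosed) (hBclosed : B.IsClosed)
    (hg : ∀ n, g n ∈ A.domain) (hh : ∀ n, h n ∈ B.domain)
    (DB : Set H) (hDBsub : DB ⊆ B.adjoint.domain) (hDBdense : Dense DB)
    (hF : F ≠ {0})
    (hframe : ∀ f ∈ F, HasSum (fun n => ⟪g n, f⟫ • h n) f)
    (hFdom : ∀ f ∈ F, f ∈ A.adjoint.domain)
    (hFmax : ∀ f (hf : f ∈ F),
      HasSum (fun n => ⟪g n, A.adjoint ⟨f, hFdom f hf⟩⟫ • h n) (A.adjoint ⟨f, hFdom f hf⟩))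
    (hAB : ∀ f (hf : f ∈ F), ∀ x (hx : x ∈ DB),
      ⟪B.adjoint ⟨x, hDBsub hx⟩, A.adjoint ⟨f, hFdom f hf⟩⟫ = ⟪x, f⟫)
    (hsub : ∀ f ∈ F, ∀ s : Set ℕ, ∃ x : H, ∀ y : H,
      Filter.Tendsto
        (fun N : ℕ =>
          ⟪y, ∑ n ∈ Finset.range (N + 1),
              Set.indicator s (fun n => ⟪A ⟨g n, hg n⟩, f⟫ • B ⟨h n, hh n⟩) n⟫)
        Filter.atTop (nhds ⟪y, x⟫)) :
    ∀ f ∈ F, HasSum (fun n => ⟪A ⟨g n, hg n⟩, f⟫ • B ⟨h n, hh n⟩) f := by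
  intro f hf
  set c : ℕ → H := fun n => ⟪A ⟨g n, hg n⟩, f⟫ • B ⟨h n, hh n⟩ with hc
  have hsummable : Summable c := op_summable c (hsub f hf)
  obtain ⟨x₀, hx₀⟩ := hsummable
  -- identify the limit
  have hBadj := LinearPMap.adjoint_isFormalAdjoint hBdense
  have hAadj := LinearPMap.adjoint_isFormalAdjoint hAdense
  have hinner : ∀ x (hx : x ∈ DB), ⟪x, x₀⟫ = ⟪x, f⟫ := by
    intro x hx
    set x' : B.adjoint.domain := ⟨x, hDBsub hx⟩ with hx'
    set f' : A.adjoint.domain := ⟨f, hFdom f hf⟩ with hf'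
    have key : ∀ n, ⟪x, c n⟫ = ⟪B.adjoint x', ⟪g n, A.adjoint f'⟫ • h n⟫ := by
      intro n
      rw [hc]
      rw [inner_smul_right, inner_smul_right]
      congr 1
      · -- ⟪A g_n, f⟫ = ⟪g n, A† f'⟫
        have := hAadj f' ⟨g n, hg n⟩
        -- this : ⟪A.adjoint f', g n⟫ = ⟪f, A ⟨g n, hg n⟩⟫
        rw [← inner_conj_symm (A ⟨g n, hg n⟩) f, ← this, inner_conj_symm]
      · -- ⟪x, B h_n⟫ = ⟪B† x', h n⟫
        exact (hBadj x' ⟨h n, hh n⟩).symm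
    have h1 : HasSum (fun n => ⟪x, c n⟫) ⟪x, x₀⟫ := (innerSL ℂ x).hasSum hx₀
    have h2 : HasSum (fun n => ⟪B.adjoint x', ⟪g n, A.adjoint f'⟫ • h n⟫)
        ⟪B.adjoint x', A.adjoint f'⟫ := (innerSL ℂ (B.adjoint x')).hasSum (hFmax f hf)
    have h1' : HasSum (fun n => ⟪B.adjoint x', ⟪g n, A.adjoint f'⟫ • h n⟫) ⟪x, x₀⟫ := by
      have hfe : (fun n => ⟪x, c n⟫) = fun n => ⟪B.adjoint x', ⟪g n, A.adjoint f'⟫ • h n⟫ :=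
        funext key
      rwa [hfe] at h1
    have := h1'.unique h2
    rw [this]
    exact hAB f hf x hx
  -- density
  have hall : ∀ x : H, ⟪x, x₀⟫ = ⟪x, f⟫ := by
    have hc1 : Continuous fun x : H => ⟪x, x₀⟫ := continuous_id.inner continuous_const
    have hc2 : Continuous fun x : H => ⟪x, f⟫ := continuous_id.inner continuous_const
    exact fun x => congrFun (Continuous.ext_on hDBdense hc1 hc2 (fun z hz => hinner z hz)) x
  have : x₀ = f := ext_inner_left ℂ hall
  rwa [this] at hx₀
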